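/- Solvability of the Duhamel fixed-point equation by Neumann series: let x₀ ∈ ℤ, let ζ : ℤ → ℂ satisfy Im ζ(w) ≥ 0 for all w ∈ ℤ, and let V : ℤ → Mat₂(ℂ) satisfy ∑_{y ≥ x₀} ‖V(y)‖ ≤ 1/2 (operator norm). For x ≤ y set Φ(x,y) = diag(1, exp(2i·∑_{w=x}^{y} ζ(w))). Then there exists ψ : ℤ → ℂ² such that: (a) ‖ψ(x)‖ ≤ 2 for all x ≥ x₀; (b) for every x ≥ x₀ the series ∑_{y ≥ x} Φ(x,y)·V(y)·ψ(y) converges absolutely and ψ(x) = (1, 0) − ∑_{y ≥ x} Φ(x,y)·V(y)·ψ(y); (c) ψ(x+1) = (diag(1, e^{−2i·ζ(x)}) + V(x))·ψ(x) for all x ≥ x₀; (d) ψ(x) → (1, 0) as x → +∞. -/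

import Mathlib

open Complex Filter Matrix

/-- The operator norm of a `2 × 2` complex matrix, viewed as a linear map on `ℂ²`. -/
noncomputable def matOpNorm (M : Matrix (Fin 2) (Fin 2) ℂ) : ℝ :=
  ‖LinearMap.toContinuousLinearMap M.mulVecLin‖

namespace DuhamelAux

lemma mulVec_opNorm (M : Matrix (Fin 2) (Fin 2) ℂ) (v : Fin 2 → ℂ) :
    ‖M.mulVec v‖ ≤ matOpNorm M * ‖v‖ := by
  simpa [matOpNorm] using (LinearMap.toContinuousLinearMap M.mulVecLin).le_opNorm v

lemma matOpNorm_nonneg (M : Matrix (Fin 2) (Fin 2) ℂ) : 0 ≤ matOpNorm M := norm_nonneg _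

noncomputable def Phi (ζ : ℤ → ℂ) (x y : ℤ) : Matrix (Fin 2) (Fin 2) ℂ :=
  Matrix.diagonal ![1, Complex.exp (2 * Complex.I * ∑ w ∈ Finset.Icc x y, ζ w)]

lemma Phi_mulVec_le (ζ : ℤ → ℂ) (hζ : ∀ w : ℤ, 0 ≤ (ζ w).im) (x y : ℤ) (v : Fin 2 → ℂ) :
    ‖(Phi ζ x y).mulVec v‖ ≤ ‖v‖ := by
  have hd : ∀ i : Fin 2, ‖(![1, Complex.exp (2 * Complex.I * ∑ w ∈ Finset.Icc x y, ζ w)] : Fin 2 → ℂ) i‖ ≤ 1 := by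
    intro i
    fin_cases i
    · simp
    · show ‖Complex.exp (2 * Complex.I * ∑ w ∈ Finset.Icc x y, ζ w)‖ ≤ 1
      rw [Complex.norm_exp]
      apply Real.exp_le_one_iff.2
      have him : 0 ≤ (∑ w ∈ Finset.Icc x y, ζ w).im := by
        rw [Complex.im_sum]
        exact Finset.sum_nonneg fun w _ => hζ w
      simp only [mul_re, Complex.I_re, Complex.I_im, mul_im, Complex.re_ofNat, Complex.im_ofNat]
      nlinarith
  apply pi_norm_le_iff_of_nonneg (norm_nonneg v) |>.2
  intro i
  rw [Phi, Matrix.mulVec_diagonal, norm_mul]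
  calc _ ≤ 1 * ‖v‖ := mul_le_mul (hd i) (norm_le_pi_norm v i) (norm_nonneg _) zero_le_one
    _ = ‖v‖ := one_mul _

variable (ζ : ℤ → ℂ) (V : ℤ → Matrix (Fin 2) (Fin 2) ℂ)

/-- pointwise bound for the Duhamel kernel -/
lemma kernel_norm_le (hζ : ∀ w : ℤ, 0 ≤ (ζ w).im) (p : ℤ → Prop) [DecidablePred p]
    (f : ℤ → Fin 2 → ℂ) (C : ℝ) (hf : ∀ y, ‖f y‖ ≤ C) (x y : ℤ) :
    ‖if p y then (Phi ζ x y).mulVec ((V y).mulVec (f y)) else 0‖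
      ≤ (if p y then matOpNorm (V y) else 0) * C := by
  have hC : 0 ≤ C := (norm_nonneg _).trans (hf 0)
  by_cases h : p y
  · simp only [h, if_true]
    calc ‖(Phi ζ x y).mulVec ((V y).mulVec (f y))‖
        ≤ ‖(V y).mulVec (f y)‖ := Phi_mulVec_le ζ hζ x y _
      _ ≤ matOpNorm (V y) * ‖f y‖ := mulVec_opNorm _ _
      _ ≤ matOpNorm (V y) * C := by
          exact mul_le_mul_of_nonneg_left (hf y) (matOpNorm_nonneg _)
  · simp [h]

lemma epsP_summable (x₀ : ℤ)
    (hVsum : Summable fun y : ℤ => if x₀ ≤ y then matOpNorm (V y) else 0)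
    (p : ℤ → Prop) [DecidablePred p] (hp : ∀ y, p y → x₀ ≤ y) :
    Summable (fun y : ℤ => if p y then matOpNorm (V y) else 0) := by
  apply hVsum.of_nonneg_of_le
  · intro y; by_cases h : p y <;> simp [h, matOpNorm_nonneg]
  · intro y
    by_cases h : p y
    · simp [h, hp y h]
    · by_cases h' : x₀ ≤ y <;> simp [h, h', matOpNorm_nonneg]

lemma kernel_summable_norm (hζ : ∀ w : ℤ, 0 ≤ (ζ w).im) (x₀ : ℤ)
    (hVsum : Summable fun y : ℤ => if x₀ ≤ y then matOpNorm (V y) else 0)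
    (p : ℤ → Prop) [DecidablePred p] (hp : ∀ y, p y → x₀ ≤ y)
    (f : ℤ → Fin 2 → ℂ) (C : ℝ) (hf : ∀ y, ‖f y‖ ≤ C) (x : ℤ) :
    Summable (fun y : ℤ => ‖if p y then (Phi ζ x y).mulVec ((V y).mulVec (f y)) else 0‖) := by
  apply Summable.of_nonneg_of_le (fun y => norm_nonneg _)
    (kernel_norm_le ζ V hζ p f C hf x)
  exact (epsP_summable V x₀ hVsum p hp).mul_right C

lemma kernel_summable (hζ : ∀ w : ℤ, 0 ≤ (ζ w).im) (x₀ : ℤ)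
    (hVsum : Summable fun y : ℤ => if x₀ ≤ y then matOpNorm (V y) else 0)
    (p : ℤ → Prop) [DecidablePred p] (hp : ∀ y, p y → x₀ ≤ y)
    (f : ℤ → Fin 2 → ℂ) (C : ℝ) (hf : ∀ y, ‖f y‖ ≤ C) (x : ℤ) :
    Summable (fun y : ℤ => if p y then (Phi ζ x y).mulVec ((V y).mulVec (f y)) else 0) :=
  (kernel_summable_norm ζ V hζ x₀ hVsum p hp f C hf x).of_norm

lemma kernel_tsum_norm_le (hζ : ∀ w : ℤ, 0 ≤ (ζ w).im) (x₀ : ℤ)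
    (hVsum : Summable fun y : ℤ => if x₀ ≤ y then matOpNorm (V y) else 0)
    (p : ℤ → Prop) [DecidablePred p] (hp : ∀ y, p y → x₀ ≤ y)
    (f : ℤ → Fin 2 → ℂ) (C : ℝ) (hf : ∀ y, ‖f y‖ ≤ C) (x : ℤ) :
    ‖∑' y : ℤ, if p y then (Phi ζ x y).mulVec ((V y).mulVec (f y)) else 0‖
      ≤ (∑' y : ℤ, if p y then matOpNorm (V y) else 0) * C := by
  calc ‖∑' y : ℤ, if p y then (Phi ζ x y).mulVec ((V y).mulVec (f y)) else 0‖
      ≤ ∑' y : ℤ, ‖if p y then (Phi ζ x y).mulVec ((V y).mulVec (f y)) else 0‖ :=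
        norm_tsum_le_tsum_norm (kernel_summable_norm ζ V hζ x₀ hVsum p hp f C hf x)
    _ ≤ ∑' y : ℤ, (if p y then matOpNorm (V y) else 0) * C := by
        apply Summable.tsum_le_tsum (kernel_norm_le ζ V hζ p f C hf x)
          (kernel_summable_norm ζ V hζ x₀ hVsum p hp f C hf x)
          ((epsP_summable V x₀ hVsum p hp).mul_right C)
    _ = (∑' y : ℤ, if p y then matOpNorm (V y) else 0) * C := tsum_mul_right

lemma epsP_tsum_le (x₀ : ℤ)
    (hVsum : Summable fun y : ℤ => if x₀ ≤ y then matOpNorm (V y) else 0)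
    (p : ℤ → Prop) [DecidablePred p] (hp : ∀ y, p y → x₀ ≤ y) :
    (∑' y : ℤ, if p y then matOpNorm (V y) else 0)
      ≤ ∑' y : ℤ, if x₀ ≤ y then matOpNorm (V y) else 0 := by
  apply Summable.tsum_le_tsum _ (epsP_summable V x₀ hVsum p hp) hVsum
  intro y
  by_cases h : p y
  · simp [h, hp y h]
  · by_cases h' : x₀ ≤ y <;> simp [h, h', matOpNorm_nonneg]

end DuhamelAux

namespace DuhamelAux

variable (ζ : ℤ → ℂ) (V : ℤ → Matrix (Fin 2) (Fin 2) ℂ) (x₀ : ℤ)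

/-- The Duhamel map on bounded functions `ℤ → ℂ²`. -/
noncomputable def Tmap (hζ : ∀ w : ℤ, 0 ≤ (ζ w).im)
    (hVsum : Summable fun y : ℤ => if x₀ ≤ y then matOpNorm (V y) else 0)
    (hVle : (∑' y : ℤ, if x₀ ≤ y then matOpNorm (V y) else 0) ≤ 1 / 2)
    (f : BoundedContinuousFunction ℤ (Fin 2 → ℂ)) :
    BoundedContinuousFunction ℤ (Fin 2 → ℂ) :=
  BoundedContinuousFunction.ofNormedAddCommGroup
    (fun x : ℤ => ![1, 0] - ∑' y : ℤ,
      if max x x₀ ≤ y then (Phi ζ x y).mulVec ((V y).mulVec (f y)) else 0)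
    continuous_of_discreteTopology
    (1 + (1/2) * ‖f‖)
    (by
      intro x
      have hp : ∀ y, max x x₀ ≤ y → x₀ ≤ y := fun y hy => le_trans (le_max_right _ _) hy
      have hf : ∀ y, ‖f y‖ ≤ ‖f‖ := fun y => f.norm_coe_le_norm y
      have h1 : ‖(![1, 0] : Fin 2 → ℂ)‖ = 1 := by
        apply le_antisymm
        · apply pi_norm_le_iff_of_nonneg (by norm_num) |>.2
          intro i; fin_cases i <;> simp
        · simpa using norm_le_pi_norm (![1,0] : Fin 2 → ℂ) 0
      calc ‖_ - _‖ ≤ ‖(![1, 0] : Fin 2 → ℂ)‖ + ‖∑' y : ℤ,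
            if max x x₀ ≤ y then (Phi ζ x y).mulVec ((V y).mulVec (f y)) else 0‖ :=
            norm_sub_le _ _
        _ ≤ 1 + (∑' y : ℤ, if max x x₀ ≤ y then matOpNorm (V y) else 0) * ‖f‖ := by
            rw [h1]
            exact (add_le_add_iff_left 1).2
              (kernel_tsum_norm_le ζ V hζ x₀ hVsum _ hp f ‖f‖ hf x)
        _ ≤ 1 + (1/2) * ‖f‖ := by
            have := epsP_tsum_le V x₀ hVsum (fun y => max x x₀ ≤ y) hp
            nlinarith [norm_nonneg f])

lemma Tmap_apply (hζ : ∀ w : ℤ, 0 ≤ (ζ w).im)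
    (hVsum : Summable fun y : ℤ => if x₀ ≤ y then matOpNorm (V y) else 0)
    (hVle : (∑' y : ℤ, if x₀ ≤ y then matOpNorm (V y) else 0) ≤ 1 / 2)
    (f : BoundedContinuousFunction ℤ (Fin 2 → ℂ)) (x : ℤ) :
    Tmap ζ V x₀ hζ hVsum hVle f x = ![1, 0] - ∑' y : ℤ,
      if max x x₀ ≤ y then (Phi ζ x y).mulVec ((V y).mulVec (f y)) else 0 := rfl

lemma Tmap_contracting (hζ : ∀ w : ℤ, 0 ≤ (ζ w).im)
    (hVsum : Summable fun y : ℤ => if x₀ ≤ y then matOpNorm (V y) else 0)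
    (hVle : (∑' y : ℤ, if x₀ ≤ y then matOpNorm (V y) else 0) ≤ 1 / 2) :
    ContractingWith (1/2 : NNReal) (Tmap ζ V x₀ hζ hVsum hVle) := by
  constructor
  · have h12 : ((1/2 : NNReal) : ℝ) < 1 := by norm_num
    exact_mod_cast h12
  · apply LipschitzWith.of_dist_le_mul
    intro f g
    have hKle : (1/2 : NNReal) = ((1:ℝ)/2 : ℝ) := by norm_num
    rw [BoundedContinuousFunction.dist_le (by positivity)]
    intro x
    have hp : ∀ y, max x x₀ ≤ y → x₀ ≤ y := fun y hy => le_trans (le_max_right _ _) hy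
    have hfg : ∀ y, ‖(fun z => f z - g z) y‖ ≤ dist f g := by
      intro y
      simpa [dist_eq_norm] using BoundedContinuousFunction.dist_coe_le_dist (f := f) (g := g) y
    have hsub : ∀ y : ℤ,
        (if max x x₀ ≤ y then (Phi ζ x y).mulVec ((V y).mulVec (f y)) else 0) -
        (if max x x₀ ≤ y then (Phi ζ x y).mulVec ((V y).mulVec (g y)) else 0) =
        (if max x x₀ ≤ y then (Phi ζ x y).mulVec ((V y).mulVec (f y - g y)) else 0) := by
      intro y
      by_cases h : max x x₀ ≤ y
      · simp only [h, if_true, Matrix.mulVec_sub]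
      · simp [h]
    rw [dist_eq_norm]
    have hc : (Tmap ζ V x₀ hζ hVsum hVle f) x - (Tmap ζ V x₀ hζ hVsum hVle g) x
        = -(∑' y : ℤ, if max x x₀ ≤ y then (Phi ζ x y).mulVec ((V y).mulVec ((fun z => f z - g z) y)) else 0) := by
      have hts : (∑' y : ℤ, if max x x₀ ≤ y then (Phi ζ x y).mulVec ((V y).mulVec ((fun z => f z - g z) y)) else 0)
          = (∑' y : ℤ, if max x x₀ ≤ y then (Phi ζ x y).mulVec ((V y).mulVec (f y)) else 0)
            - (∑' y : ℤ, if max x x₀ ≤ y then (Phi ζ x y).mulVec ((V y).mulVec (g y)) else 0) := by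
        rw [← Summable.tsum_sub
          (kernel_summable ζ V hζ x₀ hVsum _ hp f ‖f‖ (fun y => f.norm_coe_le_norm y) x)
          (kernel_summable ζ V hζ x₀ hVsum _ hp g ‖g‖ (fun y => g.norm_coe_le_norm y) x)]
        exact tsum_congr fun y => (hsub y).symm
      rw [Tmap_apply, Tmap_apply, hts]
      abel
    rw [hc, norm_neg]
    calc _ ≤ (∑' y : ℤ, if max x x₀ ≤ y then matOpNorm (V y) else 0) * dist f g :=
          kernel_tsum_norm_le ζ V hζ x₀ hVsum _ hp _ (dist f g) hfg x
      _ ≤ (1/2 : NNReal) * dist f g := by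
          push_cast
          have := epsP_tsum_le V x₀ hVsum (fun y => max x x₀ ≤ y) hp
          nlinarith [dist_nonneg (x := f) (y := g)]

end DuhamelAux

namespace DuhamelAux

lemma ite_nonneg' (ε : ℤ → ℝ) (hεpos : ∀ y, 0 ≤ ε y) (x y : ℤ) :
    0 ≤ (if x ≤ y then ε y else 0) := by by_cases h : x ≤ y <;> simp [h, hεpos y]

lemma tail_summable (ε : ℤ → ℝ) (hε : Summable ε) (hεpos : ∀ y, 0 ≤ ε y) (x : ℤ) :
    Summable (fun y : ℤ => if x ≤ y then ε y else 0) := by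
  apply hε.of_nonneg_of_le (ite_nonneg' ε hεpos x)
  intro y; by_cases h : x ≤ y <;> simp [h, hεpos y]

lemma tail_tendsto (ε : ℤ → ℝ) (hε : Summable ε) (hεpos : ∀ y, 0 ≤ ε y) :
    Tendsto (fun x : ℤ => ∑' y : ℤ, if x ≤ y then ε y else 0) atTop (nhds 0) := by
  rw [Metric.tendsto_atTop]
  intro δ hδ
  obtain ⟨s, hs⟩ := summable_iff_vanishing.1 hε {r : ℝ | r < δ/2}
    (IsOpen.mem_nhds isOpen_Iio (by simpa using half_pos hδ))
  obtain ⟨M, hM⟩ := s.exists_le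
  refine ⟨M + 1, fun x hx => ?_⟩
  have hbound : (∑' y : ℤ, if x ≤ y then ε y else 0) ≤ δ/2 := by
    apply Summable.tsum_le_of_sum_le (tail_summable ε hε hεpos x)
    intro t
    have : ∑ y ∈ t, (if x ≤ y then ε y else 0) = ∑ y ∈ t.filter (fun y => x ≤ y), ε y := by
      rw [Finset.sum_filter]
    rw [this]
    have hdisj : Disjoint (t.filter (fun y => x ≤ y)) s := by
      rw [Finset.disjoint_left]
      intro z hz hzs
      have h1 := (Finset.mem_filter.1 hz).2
      have h2 := hM z hzs
      omega
    exact le_of_lt (hs _ hdisj)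
  have hnn : 0 ≤ (∑' y : ℤ, if x ≤ y then ε y else 0) :=
    tsum_nonneg (ite_nonneg' ε hεpos x)
  rw [dist_zero_right, Real.norm_eq_abs, _root_.abs_of_nonneg hnn]
  linarith


lemma Dm_Phi (ζ : ℤ → ℂ) (x y : ℤ) (h : x + 1 ≤ y) :
    (Matrix.diagonal ![1, Complex.exp (-(2 * Complex.I * ζ x))]) * (Phi ζ x y) = Phi ζ (x+1) y := by
  rw [Phi, Phi, Matrix.diagonal_mul_diagonal]
  have hent : (fun i => (![1, Complex.exp (-(2 * Complex.I * ζ x))] : Fin 2 → ℂ) i *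
        (![1, Complex.exp (2 * Complex.I * ∑ w ∈ Finset.Icc x y, ζ w)] : Fin 2 → ℂ) i)
      = ![1, Complex.exp (2 * Complex.I * ∑ w ∈ Finset.Icc (x+1) y, ζ w)] := by
    funext i
    fin_cases i
    · show (1:ℂ) * 1 = 1; ring
    · show Complex.exp (-(2 * Complex.I * ζ x)) * Complex.exp (2 * Complex.I * ∑ w ∈ Finset.Icc x y, ζ w)
        = Complex.exp (2 * Complex.I * ∑ w ∈ Finset.Icc (x+1) y, ζ w)
      rw [← Complex.exp_add]
      congr 1
      have hins : Finset.Icc x y = insert x (Finset.Icc (x+1) y) := by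
        ext z; simp only [Finset.mem_Icc, Finset.mem_insert]; omega
      have hnot : x ∉ Finset.Icc (x+1) y := by simp only [Finset.mem_Icc]; omega
      rw [hins, Finset.sum_insert hnot]
      ring
  rw [hent]

lemma diag_exp_inv_mulVec (a : ℂ) (v : Fin 2 → ℂ) :
    (Matrix.diagonal ![1, Complex.exp (-a)]).mulVec
      ((Matrix.diagonal ![1, Complex.exp a]).mulVec v) = v := by
  rw [Matrix.mulVec_mulVec, Matrix.diagonal_mul_diagonal]
  funext i
  fin_cases i <;>
    simp [Matrix.mulVec_diagonal, ← Complex.exp_add]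

end DuhamelAux

open DuhamelAux

/-- Solvability of the Duhamel fixed-point equation by Neumann series: given
`Im ζ ≥ 0` and `∑_{y ≥ x₀} ‖V(y)‖ ≤ 1/2`, there is a solution `ψ` of
`ψ(x+1) = (diag(1, e^{−2iζ(x)}) + V(x)) ψ(x)` on `x ≥ x₀` with `‖ψ(x)‖ ≤ 2`,
satisfying the Duhamel formula and `ψ(x) → (1,0)` as `x → +∞`. -/
theorem duhamel_neumann_series
    (x₀ : ℤ) (ζ : ℤ → ℂ) (hζ : ∀ w : ℤ, 0 ≤ (ζ w).im)
    (V : ℤ → Matrix (Fin 2) (Fin 2) ℂ)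
    (hVsum : Summable fun y : ℤ => if x₀ ≤ y then matOpNorm (V y) else 0)
    (hVle : (∑' y : ℤ, if x₀ ≤ y then matOpNorm (V y) else 0) ≤ 1 / 2) :
    ∃ ψ : ℤ → Fin 2 → ℂ,
      (∀ x : ℤ, x₀ ≤ x → ‖ψ x‖ ≤ 2) ∧
      (∀ x : ℤ, x₀ ≤ x →
        Summable (fun y : ℤ => if x ≤ y then
            ‖(Matrix.diagonal
                ![1, Complex.exp (2 * Complex.I * ∑ w ∈ Finset.Icc x y, ζ w)]).mulVec
              ((V y).mulVec (ψ y))‖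
          else 0) ∧
        ψ x = ![1, 0] - ∑' y : ℤ, (if x ≤ y then
            (Matrix.diagonal
                ![1, Complex.exp (2 * Complex.I * ∑ w ∈ Finset.Icc x y, ζ w)]).mulVec
              ((V y).mulVec (ψ y))
          else 0)) ∧
      (∀ x : ℤ, x₀ ≤ x →
        ψ (x + 1) = (Matrix.diagonal ![1, Complex.exp (-(2 * Complex.I * ζ x))] + V x).mulVec (ψ x)) ∧
      Tendsto ψ atTop (nhds ![1, 0]) := by
  -- the fixed point
  set T := Tmap ζ V x₀ hζ hVsum hVle with hT
  have hcontr := Tmap_contracting ζ V x₀ hζ hVsum hVle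
  set ψb := hcontr.fixedPoint T with hψb
  have hfix : T ψb = ψb := hcontr.fixedPoint_isFixedPt
  have hψeq : ∀ x : ℤ, ψb x = ![1, 0] - ∑' y : ℤ,
      if max x x₀ ≤ y then (Phi ζ x y).mulVec ((V y).mulVec (ψb y)) else 0 := by
    intro x
    conv_lhs => rw [← hfix]
    exact Tmap_apply ζ V x₀ hζ hVsum hVle ψb x
  have hb2 : ‖ψb‖ ≤ 2 := by
    have h1 : ‖T ψb‖ ≤ 1 + (1/2) * ‖ψb‖ := by
      rw [hT]
      unfold Tmap
      exact BoundedContinuousFunction.norm_ofNormedAddCommGroup_le _ (by positivity) _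
    rw [hfix] at h1
    linarith
  have hψle : ∀ y : ℤ, ‖ψb y‖ ≤ 2 := fun y => (ψb.norm_coe_le_norm y).trans hb2
  refine ⟨⇑ψb, fun x _ => hψle x, ?_, ?_, ?_⟩
  · -- Duhamel formula
    intro x hx
    have hm : max x x₀ = x := max_eq_left hx
    have hp : ∀ y : ℤ, x ≤ y → x₀ ≤ y := fun y hy => le_trans hx hy
    constructor
    · have hs := kernel_summable_norm ζ V hζ x₀ hVsum (fun y => x ≤ y) hp ψb 2 hψle x
      simp only [Phi, apply_ite (‖·‖), norm_zero] at hs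
      exact hs
    · have h := hψeq x
      simp only [hm, Phi] at h
      exact h
  · -- recursion
    intro x hx
    have hx1 : x₀ ≤ x + 1 := by omega
    have hm : max x x₀ = x := max_eq_left hx
    have hm1 : max (x+1) x₀ = x + 1 := max_eq_left hx1
    have hEx := hψeq x
    have hEx1 := hψeq (x+1)
    simp only [hm] at hEx
    simp only [hm1] at hEx1
    have hp : ∀ y : ℤ, x ≤ y → x₀ ≤ y := fun y hy => le_trans hx hy
    have hp1 : ∀ y : ℤ, x + 1 ≤ y → x₀ ≤ y := fun y hy => le_trans hx1 hy
    set A : ℤ → Fin 2 → ℂ := fun y => (Phi ζ x y).mulVec ((V y).mulVec (ψb y)) with hA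
    have hkey : ∀ y : ℤ, (if x+1 ≤ y then (Phi ζ (x+1) y).mulVec ((V y).mulVec (ψb y)) else 0)
        = (Matrix.diagonal ![1, Complex.exp (-(2 * Complex.I * ζ x))]).mulVec
            (if x+1 ≤ y then A y else 0) := by
      intro y
      by_cases h : x + 1 ≤ y
      · simp only [h, if_true, hA]
        rw [← Dm_Phi ζ x y h, ← Matrix.mulVec_mulVec]
      · simp [h]
    have hsumA1 : Summable (fun y : ℤ => if x+1 ≤ y then A y else 0) :=
      kernel_summable ζ V hζ x₀ hVsum (fun y => x+1 ≤ y) hp1 ψb 2 hψle x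
    have hsumA : Summable (fun y : ℤ => if x ≤ y then A y else 0) :=
      kernel_summable ζ V hζ x₀ hVsum (fun y => x ≤ y) hp ψb 2 hψle x
    have hpull : (∑' y : ℤ, (Matrix.diagonal ![1, Complex.exp (-(2 * Complex.I * ζ x))]).mulVec
          (if x+1 ≤ y then A y else 0))
        = (Matrix.diagonal ![1, Complex.exp (-(2 * Complex.I * ζ x))]).mulVec
            (∑' y : ℤ, if x+1 ≤ y then A y else 0) := by
      have := (LinearMap.toContinuousLinearMap
        (Matrix.diagonal ![1, Complex.exp (-(2 * Complex.I * ζ x))]).mulVecLin).map_tsum hsumA1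
      simpa using this.symm
    have hsplit : (∑' y : ℤ, if x ≤ y then A y else 0)
        = (∑' y : ℤ, if x+1 ≤ y then A y else 0) + A x := by
      have hfun : (fun y : ℤ => if x ≤ y then A y else 0)
          = fun y : ℤ => (if x+1 ≤ y then A y else 0) + (if y = x then A x else 0) := by
        funext y
        by_cases hy : y = x
        · subst hy
          have h1 : ¬ (y + 1 ≤ y) := by omega
          simp [h1]
        · by_cases h1 : x ≤ y
          · have h2 : x + 1 ≤ y := by omega
            simp [h1, h2, hy]
          · have h2 : ¬ (x + 1 ≤ y) := by omega
            simp [h1, h2, hy]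
      rw [hfun, Summable.tsum_add hsumA1 ((hasSum_ite_eq x (A x)).summable), tsum_ite_eq]
    have hS1 : (∑' y : ℤ, if x+1 ≤ y then A y else 0)
        = (∑' y : ℤ, if x ≤ y then A y else 0) - A x := by
      rw [hsplit]; abel
    have hSx : (∑' y : ℤ, if x ≤ y then A y else 0) = ![1, 0] - ψb x := by
      rw [hEx]; abel
    have hIcc : (∑ w ∈ Finset.Icc x x, ζ w) = ζ x := by simp
    have hDA : (Matrix.diagonal ![1, Complex.exp (-(2 * Complex.I * ζ x))]).mulVec (A x)
        = (V x).mulVec (ψb x) := by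
      rw [hA]
      simp only [Phi, hIcc]
      exact diag_exp_inv_mulVec (2 * Complex.I * ζ x) ((V x).mulVec (ψb x))
    have hDe : (Matrix.diagonal ![1, Complex.exp (-(2 * Complex.I * ζ x))]).mulVec
        (![1, 0] : Fin 2 → ℂ) = ![1, 0] := by
      funext i; fin_cases i <;> simp [Matrix.mulVec_diagonal]
    rw [hEx1]
    rw [tsum_congr hkey, hpull, hS1, hSx]
    rw [Matrix.add_mulVec]
    rw [Matrix.mulVec_sub, Matrix.mulVec_sub, hDA, hDe]
    abel
  · -- tendsto
    rw [tendsto_iff_norm_sub_tendsto_zero]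
    apply squeeze_zero'
      (g := fun x : ℤ => (∑' y : ℤ, if x ≤ y then (if x₀ ≤ y then matOpNorm (V y) else 0) else 0) * 2)
      (Eventually.of_forall fun x => norm_nonneg _)
    · filter_upwards [eventually_ge_atTop x₀] with x hx
      have hm : max x x₀ = x := max_eq_left hx
      have hp : ∀ y : ℤ, x ≤ y → x₀ ≤ y := fun y hy => le_trans hx hy
      have hEx := hψeq x
      simp only [hm] at hEx
      have h1 : ψb x - ![1, 0] = -(∑' y : ℤ,
          if x ≤ y then (Phi ζ x y).mulVec ((V y).mulVec (ψb y)) else 0) := by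
        rw [hEx]; abel
      rw [h1, norm_neg]
      calc ‖∑' y : ℤ, if x ≤ y then (Phi ζ x y).mulVec ((V y).mulVec (ψb y)) else 0‖
          ≤ (∑' y : ℤ, if x ≤ y then matOpNorm (V y) else 0) * 2 :=
            kernel_tsum_norm_le ζ V hζ x₀ hVsum (fun y => x ≤ y) hp ψb 2 hψle x
        _ = (∑' y : ℤ, if x ≤ y then (if x₀ ≤ y then matOpNorm (V y) else 0) else 0) * 2 := by
            congr 1
            apply tsum_congr
            intro y
            by_cases h : x ≤ y
            · simp [h, hp y h]
            · simp [h]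
    · have ht := (tail_tendsto (fun y : ℤ => if x₀ ≤ y then matOpNorm (V y) else 0) hVsum
        (fun y => by by_cases h : x₀ ≤ y <;> simp [h, matOpNorm_nonneg])).mul_const 2
      simpa using ht
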